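/- Let τ ∈ {−,0,+}^R be a sign vector and let E_τ be a set of representative elementary flux modes conforming to τ (one representative per positive ray). Then every flux mode f ∈ C with σ(f) ≤ τ is a nonnegative linear combination of elements of E_τ: f = Σ_{e∈E_τ} α_e e with α_e ≥ 0. -/

import Mathlib

def fluxCone {S R : Type*} [Fintype R] (N : Matrix S R ℝ) (Rirr : Set R) :
    Set (R → ℝ) :=
  {f | N.mulVec f = 0 ∧ ∀ r ∈ Rirr, 0 ≤ f r}

def IsEFM {S R : Type*} [Fintype R] (N : Matrix S R ℝ) (Rirr : Set R)
    (e : R → ℝ) : Prop :=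
  e ∈ fluxCone N Rirr ∧ e ≠ 0 ∧
    ∀ g ∈ fluxCone N Rirr, g ≠ 0 →
      Function.support g ⊆ Function.support e →
      Function.support g = Function.support e

/-- `x` conforms to the sign vector `τ : R → SignType`. -/
def ConformsSign {R : Type*} (x : R → ℝ) (τ : R → SignType) : Prop :=
  ∀ r, x r = 0 ∨ (0 < x r ∧ τ r = 1) ∨ (x r < 0 ∧ τ r = -1)

open Finset

/-- `h` conforms (componentwise in sign) to `f`. -/
def ConfTo {R : Type*} (f h : R → ℝ) : Prop :=
  ∀ r, h r = 0 ∨ (0 < h r ∧ 0 < f r) ∨ (h r < 0 ∧ f r < 0)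

lemma confTo_trans {R : Type*} {f g h : R → ℝ} (h1 : ConfTo f g) (h2 : ConfTo g h) :
    ConfTo f h := by
  intro r
  rcases h2 r with h0 | ⟨hp, hgp⟩ | ⟨hn, hgn⟩
  · exact Or.inl h0
  · rcases h1 r with h0 | ⟨_, hfp⟩ | ⟨hg, _⟩
    · exact absurd h0 hgp.ne'
    · exact Or.inr (Or.inl ⟨hp, hfp⟩)
    · linarith
  · rcases h1 r with h0 | ⟨hg, _⟩ | ⟨_, hfn⟩
    · exact absurd h0 hgn.ne
    · linarith
    · exact Or.inr (Or.inr ⟨hn, hfn⟩)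

lemma confSign_of_confTo {R : Type*} {f h : R → ℝ} {τ : R → SignType}
    (hτ : ConformsSign f τ) (hc : ConfTo f h) : ConformsSign h τ := by
  intro r
  rcases hc r with h0 | ⟨hp, hfp⟩ | ⟨hn, hfn⟩
  · exact Or.inl h0
  · rcases hτ r with h0 | ⟨_, ht⟩ | ⟨hg, _⟩
    · linarith
    · exact Or.inr (Or.inl ⟨hp, ht⟩)
    · linarith
  · rcases hτ r with h0 | ⟨hg, _⟩ | ⟨_, ht⟩
    · linarith
    · linarith
    · exact Or.inr (Or.inr ⟨hn, ht⟩)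

/-- Subtraction lemma: subtracting the right multiple of `g` from `f` keeps
conformance to `f` and kills at least one coordinate of the support. -/
lemma sub_lemma {R : Type*} [Fintype R] (f g : R → ℝ)
    (hsupp : ∀ r, g r ≠ 0 → f r ≠ 0)
    (hpos : ∃ r, g r ≠ 0 ∧ 0 < f r / g r) :
    ∃ t : ℝ, 0 < t ∧ ConfTo f (f - t • g) ∧
      ∃ r₀, f r₀ ≠ 0 ∧ (f - t • g) r₀ = 0 := by
  classical
  set Spos : Finset R := univ.filter (fun r => g r ≠ 0 ∧ 0 < f r / g r) with hS
  have hne : Spos.Nonempty := by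
    obtain ⟨r, hr⟩ := hpos
    exact ⟨r, by simp [hS, hr.1, hr.2]⟩
  obtain ⟨r₀, hr₀, hmin⟩ := Spos.exists_min_image (fun r => f r / g r) hne
  simp only [hS, mem_filter, mem_univ, true_and] at hr₀
  set t := f r₀ / g r₀ with ht
  have htpos : 0 < t := hr₀.2
  have key : ∀ r, g r ≠ 0 → (f - t • g) r = g r * (f r / g r - t) := by
    intro r hgr
    simp only [Pi.sub_apply, Pi.smul_apply, smul_eq_mul]
    field_simp
  refine ⟨t, htpos, ?_, r₀, hsupp r₀ hr₀.1, ?_⟩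
  · intro r
    by_cases hgr : g r = 0
    · simp only [Pi.sub_apply, Pi.smul_apply, smul_eq_mul, hgr, mul_zero, sub_zero]
      rcases lt_trichotomy (f r) 0 with h | h | h
      · exact Or.inr (Or.inr ⟨h, h⟩)
      · exact Or.inl h
      · exact Or.inr (Or.inl ⟨h, h⟩)
    · have hfr := hsupp r hgr
      have hfρ : f r = (f r / g r) * g r := (div_mul_cancel₀ _ hgr).symm
      have hk := key r hgr
      rcases lt_trichotomy (f r / g r) 0 with hρ | hρ | hρ
      · -- ratio negative
        have hd : f r / g r - t < 0 := by linarith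
        rcases lt_or_gt_of_ne hgr with hg | hg
        · exact Or.inr (Or.inl ⟨by rw [hk]; exact mul_pos_of_neg_of_neg hg hd,
            by rw [hfρ]; exact mul_pos_of_neg_of_neg hρ hg⟩)
        · exact Or.inr (Or.inr ⟨by rw [hk]; exact mul_neg_of_pos_of_neg hg hd,
            by rw [hfρ]; exact mul_neg_of_neg_of_pos hρ hg⟩)
      · exact absurd (by rw [hfρ, hρ, zero_mul]) hfr
      · -- ratio positive
        have hrS : r ∈ Spos := by simp [hS, hgr, hρ]
        have hle : t ≤ f r / g r := hmin r hrS
        rcases eq_or_lt_of_le hle with heq | hlt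
        · exact Or.inl (by rw [hk, ← heq, sub_self, mul_zero])
        · have hd : 0 < f r / g r - t := by linarith
          rcases lt_or_gt_of_ne hgr with hg | hg
          · exact Or.inr (Or.inr ⟨by rw [hk]; exact mul_neg_of_neg_of_pos hg hd,
              by rw [hfρ]; exact mul_neg_of_pos_of_neg hρ hg⟩)
          · exact Or.inr (Or.inl ⟨by rw [hk]; exact mul_pos hg hd,
              by rw [hfρ]; exact mul_pos hρ hg⟩)
  · rw [key r₀ hr₀.1, ← ht, sub_self, mul_zero]
lemma cone_sub_smul {S R : Type*} [Fintype R] {N : Matrix S R ℝ} {Rirr : Set R}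
    {e : R → ℝ} (he : e ∈ fluxCone N Rirr) (t : ℝ) (g : R → ℝ)
    (hg : N.mulVec g = 0) (hc : ConfTo e (e - t • g)) :
    e - t • g ∈ fluxCone N Rirr := by
  constructor
  · have h : N.mulVec (e - t • g) = N.mulVec e - t • N.mulVec g := by
      rw [Matrix.mulVec_sub, Matrix.mulVec_smul]
    rw [h, he.1, hg]
    simp
  · intro r hr
    rcases hc r with h0 | ⟨hp, _⟩ | ⟨_, hn⟩
    · exact le_of_eq h0.symm
    · exact hp.le
    · exact absurd (he.2 r hr) (not_le.mpr hn)

/-- From any nonzero flux mode `f`, one can extract an EFM conforming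
(componentwise in sign) to `f`. -/
lemma exists_conforming_efm {S R : Type*} [Fintype S] [Fintype R]
    (N : Matrix S R ℝ) (Rirr : Set R) (f : R → ℝ)
    (hf : f ∈ fluxCone N Rirr) (hf0 : f ≠ 0) :
    ∃ e, IsEFM N Rirr e ∧ ConfTo f e := by
  classical
  set P : ℕ → Prop := fun n => ∃ g, (g ∈ fluxCone N Rirr ∧ g ≠ 0 ∧ ConfTo f g) ∧
    (univ.filter (fun r => g r ≠ 0)).card = n with hP
  have hPex : ∃ n, P n := by
    refine ⟨_, f, ⟨hf, hf0, ?_⟩, rfl⟩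
    intro r
    rcases lt_trichotomy (f r) 0 with h | h | h
    · exact Or.inr (Or.inr ⟨h, h⟩)
    · exact Or.inl h
    · exact Or.inr (Or.inl ⟨h, h⟩)
  obtain ⟨e, ⟨hecone, he0, hcfe⟩, hecard⟩ := Nat.find_spec hPex
  refine ⟨e, ⟨hecone, he0, ?_⟩, hcfe⟩
  intro g hgcone hg0 hsub
  by_contra hne
  obtain ⟨r₁, hr₁e, hr₁g⟩ : ∃ r, e r ≠ 0 ∧ g r = 0 := by
    obtain ⟨r, hr, hrn⟩ := Set.exists_of_ssubset (hsub.ssubset_of_ne hne)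
    exact ⟨r, hr, by simpa [Function.mem_support, not_not] using hrn⟩
  have hsupp : ∀ r, g r ≠ 0 → e r ≠ 0 := fun r hr => hsub hr
  -- find a direction g' (either g or -g) with a positive ratio
  obtain ⟨g', hg'vec, hg'conf, hg'supp, hg'pos, hg'r₁⟩ :
      ∃ g' : R → ℝ, N.mulVec g' = 0 ∧ (∀ r, g r = 0 → g' r = 0) ∧
        (∀ r, g' r ≠ 0 → e r ≠ 0) ∧ (∃ r, g' r ≠ 0 ∧ 0 < e r / g' r) ∧ g' ≠ 0 := by
    by_cases hcase : ∃ r, g r ≠ 0 ∧ 0 < e r / g r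
    · exact ⟨g, hgcone.1, fun r hr => hr, hsupp, hcase, hg0⟩
    · push_neg at hcase
      refine ⟨-g, by rw [Matrix.mulVec_neg, hgcone.1, neg_zero],
        fun r hr => by simp [hr], fun r hr => hsupp r (by simpa using hr), ?_,
        by simpa using hg0⟩
      obtain ⟨r, hr⟩ := Function.ne_iff.mp hg0
      have hr' : g r ≠ 0 := by simpa using hr
      have her : e r ≠ 0 := hsupp r hr'
      have hle : e r / g r ≤ 0 := hcase r hr'
      have hlt : e r / g r < 0 := lt_of_le_of_ne hle (div_ne_zero her hr')
      refine ⟨r, by simpa using hr', ?_⟩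
      rw [Pi.neg_apply, div_neg]
      linarith
  obtain ⟨t, htpos, hconf, r₀, hr₀e, hr₀z⟩ := sub_lemma e g' hg'supp hg'pos
  set h := e - t • g' with hh
  have hhcone : h ∈ fluxCone N Rirr := cone_sub_smul hecone t g' hg'vec hconf
  have hh0 : h ≠ 0 := by
    intro h0
    apply hr₁e
    have : e r₁ - t * g' r₁ = 0 := by
      have := congrFun h0 r₁
      simpa [hh] using this
    have hg'r : g' r₁ = 0 := hg'conf r₁ hr₁g
    rw [hg'r, mul_zero, sub_zero] at this
    exact this
  have hhsub : (univ.filter (fun r => h r ≠ 0)) ⊂ (univ.filter (fun r => e r ≠ 0)) := by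
    refine Finset.ssubset_iff_of_subset ?_ |>.mpr ⟨r₀, by simp [hr₀e], by simp [hr₀z]⟩
    intro r hr
    simp only [mem_filter, mem_univ, true_and] at hr ⊢
    rcases hconf r with h0 | ⟨_, hp⟩ | ⟨_, hn⟩
    · exact absurd h0 hr
    · exact hp.ne'
    · exact hn.ne
  have hlt : (univ.filter (fun r => h r ≠ 0)).card < Nat.find hPex := by
    rw [← hecard]
    exact Finset.card_lt_card hhsub
  exact Nat.find_min hPex hlt ⟨h, ⟨hhcone, hh0, confTo_trans hcfe hconf⟩, rfl⟩
lemma main_aux {S R : Type*} [Fintype S] [Fintype R] (N : Matrix S R ℝ)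
    (Rirr : Set R) (τ : R → SignType) (E : Finset (R → ℝ))
    (hrep : ∀ e : R → ℝ, IsEFM N Rirr e → ConformsSign e τ →
      ∃ e' ∈ E, ∃ l : ℝ, 0 < l ∧ e = l • e') (n : ℕ) :
    ∀ f : R → ℝ, (univ.filter (fun r => f r ≠ 0)).card ≤ n →
      f ∈ fluxCone N Rirr → ConformsSign f τ →
      ∃ α : (R → ℝ) → ℝ, (∀ e ∈ E, 0 ≤ α e) ∧ f = ∑ e ∈ E, α e • e := by
  classical
  induction n with
  | zero =>
    intro f hcard _ _
    refine ⟨0, fun e _ => le_refl 0, ?_⟩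
    have hf0 : f = 0 := by
      funext r
      simp only [Pi.zero_apply]
      by_contra hr
      have : r ∈ univ.filter (fun r => f r ≠ 0) := by simp [hr]
      have := Finset.card_pos.mpr ⟨r, this⟩
      omega
    rw [hf0]
    simp
  | succ n ih =>
    intro f hcard hf hτ
    by_cases hf0 : f = 0
    · refine ⟨0, fun e _ => le_refl 0, ?_⟩
      rw [hf0]; simp
    obtain ⟨e, heEFM, hcfe⟩ := exists_conforming_efm N Rirr f hf hf0
    have heconf : ConformsSign e τ := confSign_of_confTo hτ hcfe
    obtain ⟨e', he'E, l, hl, hel⟩ := hrep e heEFM heconf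
    have hsupp : ∀ r, e r ≠ 0 → f r ≠ 0 := by
      intro r hr
      rcases hcfe r with h0 | ⟨_, hp⟩ | ⟨_, hn⟩
      · exact absurd h0 hr
      · exact hp.ne'
      · exact hn.ne
    have hpos : ∃ r, e r ≠ 0 ∧ 0 < f r / e r := by
      obtain ⟨r, hr⟩ := Function.ne_iff.mp heEFM.2.1
      refine ⟨r, hr, ?_⟩
      rcases hcfe r with h0 | ⟨hp, hp'⟩ | ⟨hn, hn'⟩
      · exact absurd h0 hr
      · exact div_pos hp' hp
      · exact div_pos_of_neg_of_neg hn' hn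
    obtain ⟨t, htpos, hconf2, r₀, hr₀f, hr₀z⟩ := sub_lemma f e hsupp hpos
    set h : R → ℝ := f - t • e with hh
    have hhcone : h ∈ fluxCone N Rirr := cone_sub_smul hf t e heEFM.1.1 hconf2
    have hhτ : ConformsSign h τ := confSign_of_confTo hτ hconf2
    have hhcard : (univ.filter (fun r => h r ≠ 0)).card ≤ n := by
      have hss : (univ.filter (fun r => h r ≠ 0)) ⊂ (univ.filter (fun r => f r ≠ 0)) := by
        refine Finset.ssubset_iff_of_subset ?_ |>.mpr ⟨r₀, by simp [hr₀f], by simp [hr₀z]⟩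
        intro r hr
        simp only [mem_filter, mem_univ, true_and] at hr ⊢
        rcases hconf2 r with h0 | ⟨_, hp⟩ | ⟨_, hn⟩
        · exact absurd h0 hr
        · exact hp.ne'
        · exact hn.ne
      have := Finset.card_lt_card hss
      omega
    obtain ⟨α, hα, hsum⟩ := ih h hhcard hhcone hhτ
    refine ⟨fun x => α x + if x = e' then t * l else 0, ?_, ?_⟩
    · intro x hx
      have := hα x hx
      show 0 ≤ α x + if x = e' then t * l else 0
      split <;> [nlinarith; linarith]
    · have hsplit : ∑ x ∈ E, (α x + if x = e' then t * l else 0) • x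
          = (∑ x ∈ E, α x • x) + ∑ x ∈ E, (if x = e' then t * l else 0) • x := by
        rw [← Finset.sum_add_distrib]
        exact Finset.sum_congr rfl (fun x _ => by rw [add_smul])
      have hsecond : ∑ x ∈ E, (if x = e' then t * l else 0) • x = (t * l) • e' := by
        have : ∀ x ∈ E, (if x = e' then t * l else 0) • x
            = if x = e' then (t * l) • e' else 0 := by
          intro x _
          split
          · subst ‹x = e'›; rfl
          · exact zero_smul _ _
        rw [Finset.sum_congr rfl this, Finset.sum_ite_eq' E e' (fun _ => (t * l) • e'),
          if_pos he'E]
      rw [hsplit, hsecond, ← hsum]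
      funext r
      simp only [hh, Pi.add_apply, Pi.sub_apply, Pi.smul_apply, smul_eq_mul, hel]
      ring

/-- if `E` is a set of representative EFMs conforming to a sign
vector `τ` (one per positive ray), then every flux mode conforming to `τ` is a
nonnegative linear combination of elements of `E`. -/
theorem flux_mode_nonneg_comb_of_representative_efms {S R : Type*}
    [Fintype S] [Fintype R] (N : Matrix S R ℝ) (Rirr : Set R)
    (τ : R → SignType) (E : Finset (R → ℝ))
    (hE : ∀ e ∈ E, IsEFM N Rirr e ∧ ConformsSign e τ)
    (hrep : ∀ e : R → ℝ, IsEFM N Rirr e → ConformsSign e τ →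
      ∃ e' ∈ E, ∃ l : ℝ, 0 < l ∧ e = l • e')
    (f : R → ℝ) (hf : f ∈ fluxCone N Rirr) (hτ : ConformsSign f τ) :
    ∃ α : (R → ℝ) → ℝ, (∀ e ∈ E, 0 ≤ α e) ∧ f = ∑ e ∈ E, α e • e := by
  classical
  exact main_aux N Rirr τ E hrep _ f le_rfl hf hτ
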